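/- Lemma 8(i) (unique globally attractive fixed point of the one-variable SE map): Let φ : [0,∞) → [0,∞) be continuous, strictly monotonically increasing and continuously differentiable with φ(0) = 0, and let α ∈ (0,1) satisfy α > sup_{x>0} φ′(x)/(φ′(x)+1). Then for every fixed τ_L > 0, the equation φ((1/α − 1)·τ_S + (1/α)·τ_L) = τ_S has a unique solution τ_S* in (0,∞); this solution satisfies τ_S* < sup_{x≥0} φ(x), and moreover for every τ_S ∈ (0, τ_S*) one has τ_S < φ((1/α − 1)·τ_S + (1/α)·τ_L) < τ_S*, while for every τ_S > τ_S* one has τ_S* < φ((1/α − 1)·τ_S + (1/α)·τ_L) < τ_S. -/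

import Mathlib

open Set Filter Topology

private lemma aux_deriv_nonneg (φ : ℝ → ℝ) (hφm : StrictMonoOn φ (Set.Ici 0))
    (hφd : DifferentiableOn ℝ φ (Set.Ici 0)) {x : ℝ} (hx : 0 < x) :
    0 ≤ deriv φ x := by
  have hmem : Set.Ici (0:ℝ) ∈ 𝓝 x := Ici_mem_nhds hx
  have hder : HasDerivAt φ (deriv φ x) x :=
    ((hφd x (le_of_lt hx)).differentiableAt hmem).hasDerivAt
  have hslope : Tendsto (slope φ x) (𝓝[>] x) (𝓝 (deriv φ x)) :=
    (hasDerivAt_iff_tendsto_slope.1 hder).mono_left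
      (nhdsWithin_mono x (fun y hy => ne_of_gt hy))
  refine ge_of_tendsto hslope ?_
  filter_upwards [self_mem_nhdsWithin] with y hy
  have hy' : x < y := hy
  have h1 : φ x ≤ φ y := (hφm.monotoneOn (le_of_lt hx) (le_of_lt (hx.trans hy'))) hy'.le
  rw [slope_def_field]
  exact div_nonneg (by linarith) (by linarith)

theorem stmt4 (φ : ℝ → ℝ) (α τL : ℝ)
    (hφnn : ∀ x ∈ Set.Ici (0:ℝ), 0 ≤ φ x)
    (hφ0 : φ 0 = 0)
    (hφc : ContinuousOn φ (Set.Ici 0))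
    (hφm : StrictMonoOn φ (Set.Ici 0))
    (hφd : DifferentiableOn ℝ φ (Set.Ici 0))
    (hφd' : ContinuousOn (deriv φ) (Set.Ici 0))
    (hα : α ∈ Set.Ioo (0:ℝ) 1)
    (hα1 : sSup {y : ℝ | ∃ x > 0, y = deriv φ x / (deriv φ x + 1)} < α)
    (hτL : 0 < τL) :
    ∃ τSstar : ℝ, 0 < τSstar ∧
      φ ((1/α - 1) * τSstar + (1/α) * τL) = τSstar ∧
      (∀ τ : ℝ, 0 < τ → φ ((1/α - 1) * τ + (1/α) * τL) = τ → τ = τSstar) ∧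
      ((τSstar : EReal) < ⨆ x : Set.Ici (0:ℝ), (φ x.1 : EReal)) ∧
      (∀ τ : ℝ, 0 < τ → τ < τSstar →
        τ < φ ((1/α - 1) * τ + (1/α) * τL) ∧
        φ ((1/α - 1) * τ + (1/α) * τL) < τSstar) ∧
      (∀ τ : ℝ, τSstar < τ →
        τSstar < φ ((1/α - 1) * τ + (1/α) * τL) ∧
        φ ((1/α - 1) * τ + (1/α) * τL) < τ) := by
  obtain ⟨hα0, hαlt1⟩ := hα
  set c : ℝ := 1/α - 1 with hc
  set d : ℝ := (1/α) * τL with hd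
  have hc0 : 0 < c := by
    have : 1 < 1/α := by rw [lt_div_iff₀ hα0]; linarith
    simp only [hc]; linarith
  have hd0 : 0 < d := by
    have : 0 < 1/α := by positivity
    exact mul_pos this hτL
  -- the sup
  set S : ℝ := sSup {y : ℝ | ∃ x > 0, y = deriv φ x / (deriv φ x + 1)} with hS
  have hbdd : BddAbove {y : ℝ | ∃ x > 0, y = deriv φ x / (deriv φ x + 1)} := by
    refine ⟨1, fun y hy => ?_⟩
    obtain ⟨x, hx, rfl⟩ := hy
    have h0 := aux_deriv_nonneg φ hφm hφd hx
    rw [div_le_one (by linarith)]; linarith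
  have hle : ∀ x : ℝ, 0 < x → deriv φ x / (deriv φ x + 1) ≤ S := fun x hx =>
    le_csSup hbdd ⟨x, hx, rfl⟩
  have hS0 : 0 ≤ S := by
    have h0 := aux_deriv_nonneg φ hφm hφd one_pos
    have := hle 1 one_pos
    have : (0:ℝ) ≤ deriv φ 1 / (deriv φ 1 + 1) := div_nonneg h0 (by linarith)
    linarith [hle 1 one_pos]
  have hSα : S < α := hα1
  have hS1 : S < 1 := lt_trans hSα hαlt1
  -- pointwise derivative bounds
  have hbound : ∀ x : ℝ, 0 < x → deriv φ x ≤ S / (1 - S) := by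
    intro x hx
    have h0 := aux_deriv_nonneg φ hφm hφd hx
    have h1 := hle x hx
    rw [div_le_iff₀ (by linarith)] at h1
    rw [le_div_iff₀ (by linarith)]
    nlinarith
  have hstrict : ∀ x : ℝ, 0 < x → c * deriv φ x < 1 := by
    intro x hx
    have h0 := aux_deriv_nonneg φ hφm hφd hx
    have h1 := lt_of_le_of_lt (hle x hx) hSα
    rw [div_lt_iff₀ (by linarith)] at h1
    have hcval : c = (1 - α) / α := by rw [hc]; field_simp
    rw [hcval, div_mul_eq_mul_div, div_lt_one hα0]
    nlinarith
  set L : ℝ := c * (S / (1 - S)) with hL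
  have hL0 : 0 ≤ L := mul_nonneg hc0.le (div_nonneg hS0 (by linarith))
  have hL1 : L < 1 := by
    have hcval : c = (1 - α) / α := by rw [hc]; field_simp
    rw [hL, hcval, div_mul_div_comm, div_lt_one (by nlinarith)]
    nlinarith
  -- the map and its properties
  have hmap : ∀ τ : ℝ, 0 ≤ τ → 0 < c * τ + d := fun τ hτ => by nlinarith
  have hgder : ∀ x : ℝ, 0 < x →
      HasDerivAt (fun τ => φ (c * τ + d)) (deriv φ (c * x + d) * c) x := by
    intro x hx
    have hcx : 0 < c * x + d := hmap x hx.le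
    have hφat : HasDerivAt φ (deriv φ (c * x + d)) (c * x + d) :=
      ((hφd _ hcx.le).differentiableAt (Ici_mem_nhds hcx)).hasDerivAt
    have haff : HasDerivAt (fun τ : ℝ => c * τ + d) c x := by
      simpa using ((hasDerivAt_id x).const_mul c).add_const d
    exact hφat.comp x haff
  have hgcont : ContinuousOn (fun τ => φ (c * τ + d)) (Set.Ici 0) := by
    apply hφc.comp (by fun_prop)
    intro τ hτ
    exact (hmap τ hτ).le
  have hgmono : StrictMonoOn (fun τ => φ (c * τ + d)) (Set.Ici 0) := by
    intro a ha b hb hab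
    exact hφm (hmap a ha).le (hmap b hb).le (by nlinarith)
  -- h strictly decreasing
  have hh_anti : StrictAntiOn (fun τ => φ (c * τ + d) - τ) (Set.Ici 0) := by
    refine strictAntiOn_of_deriv_neg (convex_Ici 0) (hgcont.sub continuousOn_id) ?_
    intro x hx
    rw [interior_Ici] at hx
    have hdx : HasDerivAt (fun τ => φ (c * τ + d) - τ) (deriv φ (c * x + d) * c - 1) x :=
      (hgder x hx).sub (hasDerivAt_id' x)
    rw [hdx.deriv]
    have := hstrict (c * x + d) (hmap x hx.le)
    linarith [this]
  -- h2 antitone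
  have hh2_anti : AntitoneOn (fun τ => φ (c * τ + d) - L * τ) (Set.Ici 0) := by
    refine antitoneOn_of_deriv_nonpos (convex_Ici 0) (hgcont.sub (by fun_prop)) ?_ ?_
    · intro x hx
      rw [interior_Ici] at hx
      exact ((hgder x hx).sub ((hasDerivAt_id x).const_mul L)).differentiableAt.differentiableWithinAt
    · intro x hx
      rw [interior_Ici] at hx
      have hdx : HasDerivAt (fun τ => φ (c * τ + d) - L * τ) (deriv φ (c * x + d) * c - L) x := by
        have h := (hgder x hx).sub ((hasDerivAt_id x).const_mul L)
        simp only [mul_one] at h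
        exact h
      rw [hdx.deriv]
      have hb := hbound (c * x + d) (hmap x hx.le)
      have : deriv φ (c * x + d) * c ≤ L := by
        rw [hL]; nlinarith [mul_le_mul_of_nonneg_right hb hc0.le]
      linarith
  -- h(0) > 0
  have hφd_pos : 0 < φ d := by
    have := hφm (Set.self_mem_Ici) (le_of_lt hd0) hd0
    rwa [hφ0] at this
  have h1L : (0:ℝ) < 1 - L := by linarith
  set T : ℝ := φ d / (1 - L) + 1 with hT
  have hT0 : 0 < T := by
    have := div_nonneg hφd_pos.le h1L.le
    rw [hT]; linarith
  have hhT : φ (c * T + d) - T < 0 := by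
    have h2 := hh2_anti (Set.self_mem_Ici) (Set.mem_Ici.2 hT0.le) hT0.le
    simp only [mul_zero, sub_zero, zero_add, add_zero] at h2
    -- h2 : φ (c*T+d) - L*T ≤ φ d
    have h3 : (1 - L) * T = φ d + (1 - L) := by
      rw [hT]; field_simp
    nlinarith
  have hh0 : 0 < φ (c * 0 + d) - 0 := by
    simpa using hφd_pos
  -- IVT
  have hcont : ContinuousOn (fun τ => φ (c * τ + d) - τ) (Set.Icc 0 T) :=
    (hgcont.sub continuousOn_id).mono Set.Icc_subset_Ici_self
  have hmem : (0:ℝ) ∈ Set.Ioo (φ (c * T + d) - T) (φ (c * 0 + d) - 0) := ⟨hhT, hh0⟩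
  obtain ⟨τs, hτs_mem, hτs_eq⟩ := intermediate_value_Ioo' hT0.le hcont hmem
  obtain ⟨hτs0, hτsT⟩ := hτs_mem
  have hfix : φ (c * τs + d) = τs := by
    have h : φ (c * τs + d) - τs = 0 := hτs_eq
    linarith
  refine ⟨τs, hτs0, hfix, ?_, ?_, ?_, ?_⟩
  · -- uniqueness
    intro τ hτ0 hτeq
    by_contra hne
    rcases lt_or_gt_of_ne hne with h | h
    · have := hh_anti (Set.mem_Ici.2 hτ0.le) (Set.mem_Ici.2 hτs0.le) h
      simp only [hτeq, hfix] at this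
      linarith
    · have := hh_anti (Set.mem_Ici.2 hτs0.le) (Set.mem_Ici.2 hτ0.le) h
      simp only [hτeq, hfix] at this
      linarith
  · -- sup bound
    have hx0 : (0:ℝ) ≤ c * τs + d + 1 := by nlinarith [hmap τs hτs0.le]
    have hlt0 : φ (c * τs + d) < φ (c * τs + d + 1) :=
      hφm (hmap τs hτs0.le).le hx0 (by linarith)
    have hlt : τs < φ (c * τs + d + 1) := by linarith

    calc (τs : EReal) < (φ (c * τs + d + 1) : EReal) := by exact_mod_cast hlt
      _ ≤ ⨆ x : Set.Ici (0:ℝ), (φ x.1 : EReal) :=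
        le_iSup (fun x : Set.Ici (0:ℝ) => (φ x.1 : EReal)) ⟨c * τs + d + 1, hx0⟩
  · intro τ hτ0 hττs
    constructor
    · have := hh_anti (Set.mem_Ici.2 hτ0.le) (Set.mem_Ici.2 hτs0.le) hττs
      simp only [hfix] at this
      linarith
    · have := hgmono (Set.mem_Ici.2 hτ0.le) (Set.mem_Ici.2 hτs0.le) hττs
      simpa [hfix] using this
  · intro τ hττs
    have hτ0 : 0 < τ := hτs0.trans hττs
    constructor
    · have := hgmono (Set.mem_Ici.2 hτs0.le) (Set.mem_Ici.2 hτ0.le) hττs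
      simpa [hfix] using this
    · have := hh_anti (Set.mem_Ici.2 hτs0.le) (Set.mem_Ici.2 hτ0.le) hττs
      simp only [hfix] at this
      linarith
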